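/- Let N > 2 and let D = α + β𝒯 + γ𝒯² where α, β, γ : ℤ → ℝ are N-periodic sequences. For i ∈ ℤ let δ_i denote the N-periodic sequence with (δ_i)_j = 1 if j ≡ i (mod N) and 0 otherwise, and set dα_i := δ_i, dβ_i := 𝒯^{−1}δ_i, dγ_i := 𝒯^{−2}δ_i (viewed as difference operators). Define π_D(P, Q) := Tr(r(PD)·QD) − Tr(r(DP)·DQ). Then for all i (indices of α, β, γ taken mod N): π_D(dα_i, dβ_{i−1}) = −½α_iβ_{i−1}; π_D(dα_i, dβ_i) = ½α_iβ_i; π_D(dα_i, dγ_{i−2}) = −½α_iγ_{i−2}; π_D(dα_i, dγ_i) = ½α_iγ_i; π_D(dβ_i, dβ_{i+1}) = α_{i+1}γ_i; π_D(dβ_i, dγ_{i−1}) = −½β_iγ_{i−1}; π_D(dβ_i, dγ_i) = ½β_iγ_i; and π_D applied to every other pair of the differentials dα_i, dβ_i, dγ_i (in particular all pairs dα_i, dα_j and all pairs dγ_i, dγ_j, and all pairs whose indices are not related as above modulo N) equals 0. -/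

import Mathlib

noncomputable section

/-- A (pseudo-)difference operator, given by its coefficient sequences:
`a i j` is the `j`-th entry of the coefficient sequence of `𝒯^i`. -/
abbrev DOp : Type := ℤ → ℤ → ℝ

namespace DOp

/-- Product of difference operators, determined by `𝒯 ∘ a = (𝒯a) ∘ 𝒯`:
the coefficient of `𝒯^n` in `a * b` is `Σ_{i+j=n} a^i · 𝒯^i(b^j)`. -/
def mul (a b : DOp) : DOp := fun n j => ∑ᶠ i : ℤ, a i j * b (n - i) (j + i)

/-- The identity difference operator. -/
def one : DOp := fun n j => if n = 0 then 1 else 0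

/-- The r-matrix `r(Σ_i a^i 𝒯^i) = ½(Σ_{i>0} a^i 𝒯^i − Σ_{i<0} a^i 𝒯^i)`. -/
def rmat (a : DOp) : DOp := fun n j =>
  if 0 < n then a n j / 2 else if n < 0 then -(a n j) / 2 else 0

/-- A difference operator is a *finite* formal sum. -/
def FinSupp (a : DOp) : Prop := {i : ℤ | a i ≠ 0}.Finite

/-- `N`-periodicity of all coefficient sequences. -/
def Periodic (N : ℕ) (a : DOp) : Prop := ∀ i j, a i (j + (N : ℤ)) = a i j

/-- The trace of an `N`-periodic difference operator: `Tr D = Σ_{j=1}^N a^0_j`. -/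
def trace (N : ℕ) (a : DOp) : ℝ := ∑ j ∈ Finset.Icc (1 : ℤ) (N : ℤ), a 0 j

/-- The commutator `[A, B] = AB − BA` of difference operators. -/
def bracket (a b : DOp) : DOp := mul a b - mul b a

/-- An order-zero operator: termwise multiplication by the sequence `α`. -/
def ord0 (α : ℤ → ℝ) : DOp := fun n j => if n = 0 then α j else 0

/-- The operator `c ∘ 𝒯^k` for a sequence `c`. -/
def singleOp (k : ℤ) (c : ℤ → ℝ) : DOp := fun n j => if n = k then c j else 0

/-- The pure shift operator `𝒯^k`. -/
def Tpow (k : ℤ) : DOp := singleOp k fun _ => 1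

end DOp

/-- The `N`-periodic delta sequence supported on `j ≡ i (mod N)`. -/
def deltaSeq (N : ℕ) (i : ℤ) : ℤ → ℝ := fun j => if (j - i) % (N : ℤ) = 0 then 1 else 0

/-- The second-order operator `D = α + β𝒯 + γ𝒯²`. -/
def D2 (α β γ : ℤ → ℝ) : DOp := fun n j =>
  if n = 0 then α j else if n = 1 then β j else if n = 2 then γ j else 0

/-- The Poisson tensor evaluated on differentials:
`π_D(P, Q) = Tr(r(PD)·QD) − Tr(r(DP)·DQ)`. -/
def piD (N : ℕ) (D P Q : DOp) : ℝ :=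
  DOp.trace N (DOp.mul (DOp.rmat (DOp.mul P D)) (DOp.mul Q D))
    - DOp.trace N (DOp.mul (DOp.rmat (DOp.mul D P)) (DOp.mul D Q))

/-- `dα_i = δ_i`, as a difference operator. -/
def dA (N : ℕ) (i : ℤ) : DOp := DOp.ord0 (deltaSeq N i)

/-- `dβ_i = 𝒯^{-1} ∘ δ_i`, as a difference operator. -/
def dB (N : ℕ) (i : ℤ) : DOp := DOp.mul (DOp.Tpow (-1)) (DOp.ord0 (deltaSeq N i))

/-- `dγ_i = 𝒯^{-2} ∘ δ_i`, as a difference operator. -/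
def dC (N : ℕ) (i : ℤ) : DOp := DOp.mul (DOp.Tpow (-2)) (DOp.ord0 (deltaSeq N i))

/-- The values of the Poisson structure on second-order operators:
the restriction of `π` to `D = α + β𝒯 + γ𝒯²` in the coordinates `α_i, β_i, γ_i`. -/
def sgn (i : ℤ) : ℝ := if 0 < i then 1/2 else if i < 0 then -1/2 else 0

lemma rmat_eq (a : DOp) : DOp.rmat a = fun n j => sgn n * a n j := by
  funext n j
  unfold DOp.rmat sgn
  split_ifs <;> ring

lemma mul_single_left (k : ℤ) (c : ℤ → ℝ) (b : DOp) :
    DOp.mul (DOp.singleOp k c) b = fun n j => c j * b (n - k) (j + k) := by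
  funext n j
  unfold DOp.mul DOp.singleOp
  rw [finsum_eq_single _ k]
  · simp
  · intro i hi; simp [hi]

lemma mul_single_right (k : ℤ) (c : ℤ → ℝ) (b : DOp) :
    DOp.mul b (DOp.singleOp k c) = fun n j => b (n - k) j * c (j + (n - k)) := by
  funext n j
  unfold DOp.mul DOp.singleOp
  rw [finsum_eq_single _ (n - k)]
  · simp
  · intro i hi
    have h : ¬ (n - i = k) := by omega
    simp [h]

lemma dA_eq (N : ℕ) (i : ℤ) : dA N i = DOp.singleOp 0 (deltaSeq N i) := rfl

lemma dB_eq (N : ℕ) (i : ℤ) : dB N i = DOp.singleOp (-1) (deltaSeq N (i+1)) := by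
  unfold dB DOp.Tpow
  rw [mul_single_left]
  funext n j
  unfold DOp.ord0 DOp.singleOp deltaSeq
  have h2 : j + -1 - i = j - (i+1) := by ring
  simp only [one_mul, h2]
  by_cases h : n = -1 <;> simp [h] <;> omega

lemma dC_eq (N : ℕ) (i : ℤ) : dC N i = DOp.singleOp (-2) (deltaSeq N (i+2)) := by
  unfold dC DOp.Tpow
  rw [mul_single_left]
  funext n j
  unfold DOp.ord0 DOp.singleOp deltaSeq
  have h2 : j + -2 - i = j - (i+2) := by ring
  simp only [one_mul, h2]
  by_cases h : n = -2 <;> simp [h] <;> omega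
lemma trace_mul_eq (N : ℕ) (A B : DOp) (p : ℤ)
    (hA : ∀ i j, i ∉ ({p, p+1, p+2} : Finset ℤ) → A i j = 0) :
    DOp.trace N (DOp.mul A B) =
      ∑ j ∈ Finset.Icc (1:ℤ) N, ∑ i ∈ ({p, p+1, p+2} : Finset ℤ), A i j * B (0 - i) (j + i) := by
  unfold DOp.trace DOp.mul
  refine Finset.sum_congr rfl fun j _ => ?_
  apply finsum_eq_finset_sum_of_support_subset
  intro i hi
  simp only [Function.mem_support] at hi
  by_contra h
  exact hi (by rw [hA i j h, zero_mul])

lemma traceA (N : ℕ) (α β γ : ℤ → ℝ) (p q : ℤ) (c d : ℤ → ℝ) :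
    DOp.trace N (DOp.mul (DOp.rmat (DOp.mul (DOp.singleOp p c) (D2 α β γ)))
      (DOp.mul (DOp.singleOp q d) (D2 α β γ)))
    = ∑ j ∈ Finset.Icc (1:ℤ) N, ∑ i ∈ ({p, p+1, p+2} : Finset ℤ),
        (sgn i * (c j * D2 α β γ (i - p) (j + p))) *
        (d (j + i) * D2 α β γ (0 - i - q) (j + i + q)) := by
  rw [mul_single_left, mul_single_left, rmat_eq]
  rw [trace_mul_eq N _ _ p ?_]
  · intro i j hi
    simp only [Finset.mem_insert, Finset.mem_singleton] at hi
    have h0 : i - p ≠ 0 := by omega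
    have h1 : i - p ≠ 1 := by omega
    have h2 : i - p ≠ 2 := by omega
    simp [D2, h0, h1, h2]

lemma traceB (N : ℕ) (α β γ : ℤ → ℝ) (p q : ℤ) (c d : ℤ → ℝ) :
    DOp.trace N (DOp.mul (DOp.rmat (DOp.mul (D2 α β γ) (DOp.singleOp p c)))
      (DOp.mul (D2 α β γ) (DOp.singleOp q d)))
    = ∑ j ∈ Finset.Icc (1:ℤ) N, ∑ i ∈ ({p, p+1, p+2} : Finset ℤ),
        (sgn i * (D2 α β γ (i - p) j * c (j + (i - p)))) *
        (D2 α β γ (0 - i - q) (j + i) * d (j + i + (0 - i - q))) := by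
  rw [mul_single_right, mul_single_right, rmat_eq]
  rw [trace_mul_eq N _ _ p ?_]
  · intro i j hi
    simp only [Finset.mem_insert, Finset.mem_singleton] at hi
    have h0 : i - p ≠ 0 := by omega
    have h1 : i - p ≠ 1 := by omega
    have h2 : i - p ≠ 2 := by omega
    simp [D2, h0, h1, h2]

lemma piD_single (N : ℕ) (α β γ : ℤ → ℝ) (p q : ℤ) (c d : ℤ → ℝ) :
    piD N (D2 α β γ) (DOp.singleOp p c) (DOp.singleOp q d)
    = (∑ j ∈ Finset.Icc (1:ℤ) N, ∑ i ∈ ({p, p+1, p+2} : Finset ℤ),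
        (sgn i * (c j * D2 α β γ (i - p) (j + p))) *
        (d (j + i) * D2 α β γ (0 - i - q) (j + i + q)))
    - (∑ j ∈ Finset.Icc (1:ℤ) N, ∑ i ∈ ({p, p+1, p+2} : Finset ℤ),
        (sgn i * (D2 α β γ (i - p) j * c (j + (i - p)))) *
        (D2 α β γ (0 - i - q) (j + i) * d (j + i + (0 - i - q)))) := by
  unfold piD
  rw [traceA, traceB]
lemma per_int (f : ℤ → ℝ) (N : ℕ) (hf : ∀ j, f (j + (N:ℤ)) = f j) :
    ∀ (k j : ℤ), f (j + (N:ℤ) * k) = f j := by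
  intro k
  induction k using Int.induction_on with
  | zero => simp
  | succ k ih => intro j; have : j + (N:ℤ) * (k+1) = (j + N*k) + N := by ring
                 rw [this, hf, ih]
  | pred k ih => intro j
                 have : j + (N:ℤ) * (-k-1) + N = j + N * (-k) := by ring
                 have h2 := hf (j + (N:ℤ) * (-k-1))
                 rw [this] at h2
                 rw [← h2]
                 exact ih j

lemma per_congr (f : ℤ → ℝ) (N : ℕ) (hf : ∀ j, f (j + (N:ℤ)) = f j)
    {a b : ℤ} (h : a ≡ b [ZMOD (N:ℤ)]) : f a = f b := by
  obtain ⟨k, hk⟩ := h.symm.dvd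
  have : a = b + (N:ℤ) * k := by omega
  rw [this, per_int f N hf]

lemma deltaSeq_one {N : ℕ} {a j : ℤ} (h : j ≡ a [ZMOD (N:ℤ)]) : deltaSeq N a j = 1 := by
  unfold deltaSeq
  have : (j - a) % (N:ℤ) = 0 := Int.emod_eq_zero_of_dvd h.symm.dvd
  simp [this]

lemma deltaSeq_zero {N : ℕ} {a j : ℤ} (h : ¬ j ≡ a [ZMOD (N:ℤ)]) : deltaSeq N a j = 0 := by
  unfold deltaSeq
  have : ¬ (j - a) % (N:ℤ) = 0 := by
    intro hc
    exact h (Int.ModEq.symm (Int.modEq_iff_dvd.mpr (Int.dvd_of_emod_eq_zero hc)))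
  simp [this]

lemma sum_delta (N : ℕ) (hN : 0 < N) (a : ℤ) (f : ℤ → ℝ)
    (hf : ∀ j, f (j + (N:ℤ)) = f j) :
    ∑ j ∈ Finset.Icc (1:ℤ) (N:ℤ), deltaSeq N a j * f j = f a := by
  have hNZ : (0:ℤ) < (N:ℤ) := by exact_mod_cast hN
  set j0 : ℤ := (a - 1) % (N:ℤ) + 1 with hj0
  have hmem : j0 ∈ Finset.Icc (1:ℤ) (N:ℤ) := by
    have h1 := Int.emod_nonneg (a-1) (by omega : (N:ℤ) ≠ 0)
    have h2 := Int.emod_lt_of_pos (a-1) hNZ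
    simp only [Finset.mem_Icc]; omega
  have hc : j0 ≡ a [ZMOD (N:ℤ)] := by
    have := Int.emod_emod_of_dvd (a-1) (dvd_refl (N:ℤ))
    have h3 : (N:ℤ) ∣ (a - 1) - (a-1) % (N:ℤ) := Int.dvd_self_sub_of_emod_eq rfl
    have : (N:ℤ) ∣ a - j0 := by
      obtain ⟨k, hk⟩ := h3; exact ⟨k, by omega⟩
    exact (Int.modEq_iff_dvd.mpr this)
  rw [Finset.sum_eq_single j0]
  · rw [deltaSeq_one hc, one_mul]
    exact per_congr f N hf hc
  · intro j hj hne
    have hj' : j ≡ a [ZMOD (N:ℤ)] → False := by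
      intro hja
      have hd : (N:ℤ) ∣ j - j0 := (hja.trans hc.symm).symm.dvd
      simp only [Finset.mem_Icc] at hj hmem
      have : j - j0 = 0 := Int.eq_zero_of_abs_lt_dvd hd (by rw [abs_lt]; omega)
      omega
    rw [deltaSeq_zero (fun h => hj' h), zero_mul]
  · intro h; exact absurd hmem h

lemma deltaSeq_sq (N : ℕ) (a j : ℤ) :
    deltaSeq N a j * deltaSeq N a j = deltaSeq N a j := by
  unfold deltaSeq; split_ifs <;> norm_num

lemma deltaSeq_congr {N : ℕ} {a b : ℤ} (h : a ≡ b [ZMOD (N:ℤ)]) :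
    deltaSeq N a = deltaSeq N b := by
  funext j
  by_cases hj : j ≡ a [ZMOD (N:ℤ)]
  · rw [deltaSeq_one hj, deltaSeq_one (hj.trans h)]
  · rw [deltaSeq_zero hj, deltaSeq_zero (fun hc => hj (hc.trans h.symm))]

lemma sum_delta_delta (N : ℕ) (hN : 0 < N) (a b : ℤ) (f : ℤ → ℝ)
    (hf : ∀ j, f (j + (N:ℤ)) = f j) :
    ∑ j ∈ Finset.Icc (1:ℤ) (N:ℤ), deltaSeq N a j * (deltaSeq N b j * f j)
      = if a ≡ b [ZMOD (N:ℤ)] then f a else 0 := by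
  by_cases h : a ≡ b [ZMOD (N:ℤ)]
  · rw [if_pos h]
    calc ∑ j ∈ Finset.Icc (1:ℤ) (N:ℤ), deltaSeq N a j * (deltaSeq N b j * f j)
        = ∑ j ∈ Finset.Icc (1:ℤ) (N:ℤ), deltaSeq N a j * f j := by
          refine Finset.sum_congr rfl fun j _ => ?_
          rw [← deltaSeq_congr h, ← mul_assoc, deltaSeq_sq]
      _ = f a := sum_delta N hN a f hf
  · rw [if_neg h]
    refine Finset.sum_eq_zero fun j _ => ?_
    by_cases hj : j ≡ a [ZMOD (N:ℤ)]
    · rw [deltaSeq_zero (fun hc : j ≡ b [ZMOD (N:ℤ)] => h (hj.symm.trans hc)), zero_mul, mul_zero]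
    · rw [deltaSeq_zero hj, zero_mul]
lemma deltaSeq_eq_of (N : ℕ) {a j b j' : ℤ} (h : j - a = j' - b) :
    deltaSeq N a j = deltaSeq N b j' := by
  unfold deltaSeq; rw [h]

lemma nmod {N : ℕ} (hN : 2 < N) {a b : ℤ}
    (h : a - b = 1 ∨ a - b = -1 ∨ a - b = 2 ∨ a - b = -2) : ¬ a ≡ b [ZMOD (N:ℤ)] := by
  intro hc
  have hd : (N:ℤ) ∣ b - a := hc.dvd
  have hd' : (N:ℤ) ∣ |b - a| := (dvd_abs _ _).mpr hd
  have h1 : (0:ℤ) < |b - a| := by rcases h with h|h|h|h <;> rw [abs_pos] <;> omega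
  have h2 := Int.le_of_dvd h1 hd'
  have : |b - a| ≤ 2 := by rcases h with h|h|h|h <;> rw [abs_le] <;> omega
  omega

lemma modeq_of_shift {n a b a' b' : ℤ} (h : a ≡ b [ZMOD n]) (e : a' - b' = a - b) :
    a' ≡ b' [ZMOD n] := by
  have h2 := h.add_right (a' - a)
  have e1 : a + (a' - a) = a' := by ring
  have e2 : b + (a' - a) = b' := by omega
  rwa [e1, e2] at h2

lemma modeq_iff_modeq {n a b a' b' : ℤ} (e : a' - b' = a - b ∨ a' - b' = b - a) :
    (a' ≡ b' [ZMOD n]) ↔ (a ≡ b [ZMOD n]) := by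
  rcases e with e | e
  · exact ⟨fun h => modeq_of_shift h (by omega), fun h => modeq_of_shift h e⟩
  · exact ⟨fun h => (modeq_of_shift h (by omega : b - a = a' - b')).symm,
      fun h => modeq_of_shift h.symm e⟩

lemma sum_dd (N : ℕ) (hN : 0 < N) (a b : ℤ) (f : ℤ → ℝ)
    (hf : ∀ j, f (j + (N:ℤ)) = f j) (E : ℤ → ℝ) (v : ℝ) (C : Prop) [Decidable C]
    (hE : ∀ j, E j = deltaSeq N a j * (deltaSeq N b j * f j))
    (hv : f a = v)
    (hC : C ↔ (a ≡ b [ZMOD (N:ℤ)])) :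
    ∑ j ∈ Finset.Icc (1:ℤ) (N:ℤ), E j = if C then v else 0 := by
  rw [Finset.sum_congr rfl (fun j _ => hE j), sum_delta_delta N hN a b f hf, hv]
  by_cases h : C
  · rw [if_pos h, if_pos (hC.mp h)]
  · rw [if_neg h, if_neg (fun hc => h (hC.mpr hc))]
section Cases
variable {N : ℕ} (hN : 2 < N) (α β γ : ℤ → ℝ)
  (hα : ∀ j : ℤ, α (j + (N : ℤ)) = α j)
  (hβ : ∀ j : ℤ, β (j + (N : ℤ)) = β j)
  (hγ : ∀ j : ℤ, γ (j + (N : ℤ)) = γ j)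

include hN hα hβ in
lemma caseAB (i k : ℤ) :
    piD N (D2 α β γ) (dA N i) (dB N k) =
      (if k ≡ i [ZMOD (N:ℤ)] then β i * α i / 2 else 0)
      - (if k ≡ i - 1 [ZMOD (N:ℤ)] then β (i-1) * α i / 2 else 0) := by
  have hN0 : 0 < N := by omega
  rw [dA_eq, dB_eq, piD_single]
  conv_lhs => norm_num [Finset.sum_insert, Finset.mem_insert, Finset.mem_singleton, sgn, D2]
  conv_lhs => ring_nf
  rw [sum_dd N hN0 i k (fun j => β j * α j / 2)
      (by intro j; beta_reduce; rw [hα, hβ])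
      (fun x => deltaSeq N i x * β x * deltaSeq N (1 + k) (1 + x) * α x * (1 / 2))
      (β i * α i / 2) (k ≡ i [ZMOD (N:ℤ)])
      (fun x => by beta_reduce
                   rw [deltaSeq_eq_of N (show (1+x) - (1+k) = x - k by ring)]; ring)
      (by beta_reduce; ring) (modeq_iff_modeq (by omega)),
    sum_dd N hN0 (i-1) k (fun j => β j * α (j+1) / 2)
      (by intro j; beta_reduce;
          rw [show j + (N:ℤ) + 1 = (j+1) + (N:ℤ) by ring, hα, hβ])
      (fun x => β x * deltaSeq N i (1 + x) * α (1 + x) * deltaSeq N (1 + k) (1 + x) * (1 / 2))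
      (β (i-1) * α i / 2) (k ≡ i - 1 [ZMOD (N:ℤ)])
      (fun x => by beta_reduce
                   rw [deltaSeq_eq_of N (show (1+x) - i = x - (i-1) by ring),
                       deltaSeq_eq_of N (show (1+x) - (1+k) = x - k by ring)]; ring)
      (by beta_reduce; ring_nf) (modeq_iff_modeq (by omega))]

include hN hα hβ hγ in
lemma caseAC (i k : ℤ) :
    piD N (D2 α β γ) (dA N i) (dC N k) =
      ((if k ≡ i - 1 [ZMOD (N:ℤ)] then β i * β (i-1) / 2 else 0)
        + (if k ≡ i [ZMOD (N:ℤ)] then γ i * α i / 2 else 0))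
      - ((if k ≡ i - 1 [ZMOD (N:ℤ)] then β i * β (i-1) / 2 else 0)
        + (if k ≡ i - 2 [ZMOD (N:ℤ)] then γ (i-2) * α i / 2 else 0)) := by
  have hN0 : 0 < N := by omega
  rw [dA_eq, dC_eq, piD_single]
  conv_lhs => norm_num [Finset.sum_insert, Finset.mem_insert, Finset.mem_singleton, sgn, D2]
  conv_lhs => ring_nf
  rw [Finset.sum_add_distrib, Finset.sum_add_distrib]
  rw [sum_dd N hN0 i (k+1) (fun j => β j * β (j-1) / 2)
      (by intro j; beta_reduce;
          rw [show j + (N:ℤ) - 1 = (j-1) + (N:ℤ) by ring, hβ, hβ])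
      (fun x => deltaSeq N i x * β x * deltaSeq N (2 + k) (1 + x) * β (-1 + x) * (1 / 2))
      (β i * β (i-1) / 2) (k ≡ i - 1 [ZMOD (N:ℤ)])
      (fun x => by beta_reduce
                   rw [deltaSeq_eq_of N (show (1+x) - (2+k) = x - (k+1) by ring)]; ring)
      (by beta_reduce; ring_nf) (modeq_iff_modeq (by omega)),
    sum_dd N hN0 i k (fun j => γ j * α j / 2)
      (by intro j; beta_reduce; rw [hα, hγ])
      (fun x => deltaSeq N i x * γ x * deltaSeq N (2 + k) (2 + x) * α x * (1 / 2))
      (γ i * α i / 2) (k ≡ i [ZMOD (N:ℤ)])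
      (fun x => by beta_reduce
                   rw [deltaSeq_eq_of N (show (2+x) - (2+k) = x - k by ring)]; ring)
      (by beta_reduce; ring_nf) (modeq_iff_modeq (by omega)),
    sum_dd N hN0 (i-1) k (fun j => β j * β (j+1) / 2)
      (by intro j; beta_reduce;
          rw [show j + (N:ℤ) + 1 = (j+1) + (N:ℤ) by ring, hβ, hβ])
      (fun x => β x * deltaSeq N i (1 + x) * β (1 + x) * deltaSeq N (2 + k) (2 + x) * (1 / 2))
      (β i * β (i-1) / 2) (k ≡ i - 1 [ZMOD (N:ℤ)])
      (fun x => by beta_reduce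
                   rw [deltaSeq_eq_of N (show (1+x) - i = x - (i-1) by ring),
                       deltaSeq_eq_of N (show (2+x) - (2+k) = x - k by ring)]; ring)
      (by beta_reduce; ring_nf) (modeq_iff_modeq (by omega)),
    sum_dd N hN0 (i-2) k (fun j => γ j * α (j+2) / 2)
      (by intro j; beta_reduce;
          rw [show j + (N:ℤ) + 2 = (j+2) + (N:ℤ) by ring, hα, hγ])
      (fun x => deltaSeq N (2 + k) (2 + x) * γ x * deltaSeq N i (2 + x) * α (2 + x) * (1 / 2))
      (γ (i-2) * α i / 2) (k ≡ i - 2 [ZMOD (N:ℤ)])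
      (fun x => by beta_reduce
                   rw [deltaSeq_eq_of N (show (2+x) - i = x - (i-2) by ring),
                       deltaSeq_eq_of N (show (2+x) - (2+k) = x - k by ring)]; ring)
      (by beta_reduce; ring_nf) (modeq_iff_modeq (by omega))]

include hN hα hγ in
lemma caseBB (i k : ℤ) :
    piD N (D2 α β γ) (dB N i) (dB N k) =
      ((if i ≡ k + 1 [ZMOD (N:ℤ)] then -(α i * γ (i-1)) / 2 else 0)
        + (if k ≡ i + 1 [ZMOD (N:ℤ)] then γ i * α (i+1) / 2 else 0))
      - ((if k ≡ i + 1 [ZMOD (N:ℤ)] then -(α (i+1) * γ i) / 2 else 0)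
        + (if i ≡ k + 1 [ZMOD (N:ℤ)] then γ (i-1) * α i / 2 else 0)) := by
  have hN0 : 0 < N := by omega
  rw [dB_eq, dB_eq, piD_single]
  conv_lhs => norm_num [Finset.sum_insert, Finset.mem_insert, Finset.mem_singleton, sgn, D2]
  conv_lhs => ring_nf
  rw [Finset.sum_add_distrib, Finset.sum_add_distrib]
  rw [sum_dd N hN0 (1+i) (k+2) (fun j => -(α (j-1) * γ (j-1-1)) / 2)
      (by intro j; beta_reduce;
          rw [show j + (N:ℤ) - 1 = (j-1) + (N:ℤ) by ring, hα,
              show j - 1 + (N:ℤ) - 1 = (j-1-1) + (N:ℤ) by ring, hγ])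
      (fun x => deltaSeq N (1 + i) x * α (-1 + x) * deltaSeq N (1 + k) (-1 + x) * γ (-2 + x) * (-1 / 2))
      (-(α i * γ (i-1)) / 2) (i ≡ k + 1 [ZMOD (N:ℤ)])
      (fun x => by beta_reduce
                   rw [deltaSeq_eq_of N (show (-1 + x) - (1+k) = x - (k+2) by ring)]; ring)
      (by beta_reduce; ring_nf) (modeq_iff_modeq (by omega)),
    sum_dd N hN0 (1+i) k (fun j => γ (j-1) * α j / 2)
      (by intro j; beta_reduce;
          rw [show j + (N:ℤ) - 1 = (j-1) + (N:ℤ) by ring, hα, hγ])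
      (fun x => deltaSeq N (1 + i) x * γ (-1 + x) * deltaSeq N (1 + k) (1 + x) * α x * (1 / 2))
      (γ i * α (i+1) / 2) (k ≡ i + 1 [ZMOD (N:ℤ)])
      (fun x => by beta_reduce
                   rw [deltaSeq_eq_of N (show (1+x) - (1+k) = x - k by ring)]; ring)
      (by beta_reduce; ring_nf) (modeq_iff_modeq (by omega)),
    sum_dd N hN0 (1+i) k (fun j => -(α j * γ (j-1)) / 2)
      (by intro j; beta_reduce;
          rw [show j + (N:ℤ) - 1 = (j-1) + (N:ℤ) by ring, hα, hγ])
      (fun x => α x * deltaSeq N (1 + i) x * γ (-1 + x) * deltaSeq N (1 + k) (1 + x) * (-1 / 2))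
      (-(α (i+1) * γ i) / 2) (k ≡ i + 1 [ZMOD (N:ℤ)])
      (fun x => by beta_reduce
                   rw [deltaSeq_eq_of N (show (1 + x) - (1+k) = x - k by ring)]; ring)
      (by beta_reduce; ring_nf) (modeq_iff_modeq (by omega)),
    sum_dd N hN0 (i-1) k (fun j => γ j * α (j+1) / 2)
      (by intro j; beta_reduce;
          rw [show j + (N:ℤ) + 1 = (j+1) + (N:ℤ) by ring, hα, hγ])
      (fun x => deltaSeq N (1 + k) (1 + x) * γ x * deltaSeq N (1 + i) (2 + x) * α (1 + x) * (1 / 2))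
      (γ (i-1) * α i / 2) (i ≡ k + 1 [ZMOD (N:ℤ)])
      (fun x => by beta_reduce
                   rw [deltaSeq_eq_of N (show (2+x) - (1+i) = x - (i-1) by ring),
                       deltaSeq_eq_of N (show (1+x) - (1+k) = x - k by ring)]; ring)
      (by beta_reduce; ring_nf) (modeq_iff_modeq (by omega))]

include hN hβ hγ in
lemma caseBC (i k : ℤ) :
    piD N (D2 α β γ) (dB N i) (dC N k) =
      (if k ≡ i [ZMOD (N:ℤ)] then γ i * β i / 2 else 0)
      - (if k ≡ i - 1 [ZMOD (N:ℤ)] then γ (i-1) * β i / 2 else 0) := by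
  have hN0 : 0 < N := by omega
  rw [dB_eq, dC_eq, piD_single]
  conv_lhs => norm_num [Finset.sum_insert, Finset.mem_insert, Finset.mem_singleton, sgn, D2]
  conv_lhs => ring_nf
  rw [sum_dd N hN0 (1+i) (k+1) (fun j => γ (j-1) * β (j-1) / 2)
      (by intro j; beta_reduce;
          rw [show j + (N:ℤ) - 1 = (j-1) + (N:ℤ) by ring, hβ, hγ])
      (fun x => deltaSeq N (1 + i) x * γ (-1 + x) * deltaSeq N (2 + k) (1 + x) * β (-1 + x) * (1 / 2))
      (γ i * β i / 2) (k ≡ i [ZMOD (N:ℤ)])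
      (fun x => by beta_reduce
                   rw [deltaSeq_eq_of N (show (1+x) - (2+k) = x - (k+1) by ring)]; ring)
      (by beta_reduce; ring_nf) (modeq_iff_modeq (by omega)),
    sum_dd N hN0 (i-1) k (fun j => γ j * β (j+1) / 2)
      (by intro j; beta_reduce;
          rw [show j + (N:ℤ) + 1 = (j+1) + (N:ℤ) by ring, hβ, hγ])
      (fun x => γ x * deltaSeq N (1 + i) (2 + x) * β (1 + x) * deltaSeq N (2 + k) (2 + x) * (1 / 2))
      (γ (i-1) * β i / 2) (k ≡ i - 1 [ZMOD (N:ℤ)])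
      (fun x => by beta_reduce
                   rw [deltaSeq_eq_of N (show (2+x) - (1+i) = x - (i-1) by ring),
                       deltaSeq_eq_of N (show (2+x) - (2+k) = x - k by ring)]; ring)
      (by beta_reduce; ring_nf) (modeq_iff_modeq (by omega))]

include hN hα hβ in
lemma caseBA (i k : ℤ) :
    piD N (D2 α β γ) (dB N i) (dA N k) =
      -(if i ≡ k [ZMOD (N:ℤ)] then α i * β i / 2 else 0)
      + (if i ≡ k - 1 [ZMOD (N:ℤ)] then α (i+1) * β i / 2 else 0) := by
  have hN0 : 0 < N := by omega
  rw [dB_eq, dA_eq, piD_single]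
  conv_lhs => norm_num [Finset.sum_insert, Finset.mem_insert, Finset.mem_singleton, sgn, D2]
  conv_lhs => ring_nf
  rw [sum_dd N hN0 (1+i) (k+1) (fun j => α (j-1) * β (j-1) / 2)
      (by intro j; beta_reduce;
          rw [show j + (N:ℤ) - 1 = (j-1) + (N:ℤ) by ring, hα, hβ])
      (fun x => deltaSeq N (1 + i) x * α (-1 + x) * deltaSeq N k (-1 + x) * β (-1 + x) * (1 / 2))
      (α i * β i / 2) (i ≡ k [ZMOD (N:ℤ)])
      (fun x => by beta_reduce
                   rw [deltaSeq_eq_of N (show (-1 + x) - k = x - (k+1) by ring)]; ring)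
      (by beta_reduce; ring_nf) (modeq_iff_modeq (by omega)),
    sum_dd N hN0 (1+i) k (fun j => α j * β (j-1) / 2)
      (by intro j; beta_reduce;
          rw [show j + (N:ℤ) - 1 = (j-1) + (N:ℤ) by ring, hα, hβ])
      (fun x => α x * deltaSeq N (1 + i) x * β (-1 + x) * deltaSeq N k x * (1 / 2))
      (α (i+1) * β i / 2) (i ≡ k - 1 [ZMOD (N:ℤ)])
      (fun x => by beta_reduce; ring)
      (by beta_reduce; ring_nf) (modeq_iff_modeq (by omega))]

include hN hα hβ hγ in
lemma caseCA (i k : ℤ) :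
    piD N (D2 α β γ) (dC N i) (dA N k) =
      ((if i ≡ k [ZMOD (N:ℤ)] then -(α i * γ i) / 2 else 0)
        + (if i ≡ k - 1 [ZMOD (N:ℤ)] then -(β i * β (i+1)) / 2 else 0))
      - ((if i ≡ k - 2 [ZMOD (N:ℤ)] then -(α (i+2) * γ i) / 2 else 0)
        + (if i ≡ k - 1 [ZMOD (N:ℤ)] then -(β i * β (i+1)) / 2 else 0)) := by
  have hN0 : 0 < N := by omega
  rw [dC_eq, dA_eq, piD_single]
  conv_lhs => norm_num [Finset.sum_insert, Finset.mem_insert, Finset.mem_singleton, sgn, D2]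
  conv_lhs => ring_nf
  rw [Finset.sum_add_distrib, Finset.sum_add_distrib]
  rw [sum_dd N hN0 (2+i) (k+2) (fun j => -(α (j-2) * γ (j-2)) / 2)
      (by intro j; beta_reduce;
          rw [show j + (N:ℤ) - 2 = (j-2) + (N:ℤ) by ring, hα, hγ])
      (fun x => deltaSeq N (2 + i) x * α (-2 + x) * deltaSeq N k (-2 + x) * γ (-2 + x) * (-1 / 2))
      (-(α i * γ i) / 2) (i ≡ k [ZMOD (N:ℤ)])
      (fun x => by beta_reduce
                   rw [deltaSeq_eq_of N (show (-2 + x) - k = x - (k+2) by ring)]; ring)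
      (by beta_reduce; ring_nf) (modeq_iff_modeq (by omega)),
    sum_dd N hN0 (2+i) (k+1) (fun j => -(β (j-2) * β (j-1)) / 2)
      (by intro j; beta_reduce;
          rw [show j + (N:ℤ) - 2 = (j-2) + (N:ℤ) by ring, show j + (N:ℤ) - 1 = (j-1) + (N:ℤ) by ring, hβ, hβ])
      (fun x => deltaSeq N (2 + i) x * β (-2 + x) * deltaSeq N k (-1 + x) * β (-1 + x) * (-1 / 2))
      (-(β i * β (i+1)) / 2) (i ≡ k - 1 [ZMOD (N:ℤ)])
      (fun x => by beta_reduce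
                   rw [deltaSeq_eq_of N (show (-1 + x) - k = x - (k+1) by ring)]; ring)
      (by beta_reduce; ring_nf) (modeq_iff_modeq (by omega)),
    sum_dd N hN0 (2+i) k (fun j => -(α j * γ (j-2)) / 2)
      (by intro j; beta_reduce;
          rw [show j + (N:ℤ) - 2 = (j-2) + (N:ℤ) by ring, hα, hγ])
      (fun x => α x * deltaSeq N (2 + i) x * γ (-2 + x) * deltaSeq N k x * (-1 / 2))
      (-(α (i+2) * γ i) / 2) (i ≡ k - 2 [ZMOD (N:ℤ)])
      (fun x => by beta_reduce; ring)
      (by beta_reduce; ring_nf) (modeq_iff_modeq (by omega)),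
    sum_dd N hN0 (i+1) k (fun j => -(β j * β (j-1)) / 2)
      (by intro j; beta_reduce;
          rw [show j + (N:ℤ) - 1 = (j-1) + (N:ℤ) by ring, hβ, hβ])
      (fun x => deltaSeq N k x * β x * deltaSeq N (2 + i) (1 + x) * β (-1 + x) * (-1 / 2))
      (-(β i * β (i+1)) / 2) (i ≡ k - 1 [ZMOD (N:ℤ)])
      (fun x => by beta_reduce
                   rw [deltaSeq_eq_of N (show (1 + x) - (2+i) = x - (i+1) by ring)]; ring)
      (by beta_reduce; ring_nf) (modeq_iff_modeq (by omega))]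

include hN hβ hγ in
lemma caseCB (i k : ℤ) :
    piD N (D2 α β γ) (dC N i) (dB N k) =
      -(if i ≡ k [ZMOD (N:ℤ)] then β i * γ i / 2 else 0)
      + (if i ≡ k - 1 [ZMOD (N:ℤ)] then β (i+1) * γ i / 2 else 0) := by
  have hN0 : 0 < N := by omega
  rw [dC_eq, dB_eq, piD_single]
  conv_lhs => norm_num [Finset.sum_insert, Finset.mem_insert, Finset.mem_singleton, sgn, D2]
  conv_lhs => ring_nf
  rw [sum_dd N hN0 (2+i) (k+2) (fun j => β (j-2) * γ (j-1-1) / 2)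
      (by intro j; beta_reduce;
          rw [show j + (N:ℤ) - 2 = (j-2) + (N:ℤ) by ring, show j + (N:ℤ) - 1 - 1 = (j-1-1) + (N:ℤ) by ring, hβ, hγ])
      (fun x => deltaSeq N (2 + i) x * β (-2 + x) * deltaSeq N (1 + k) (-1 + x) * γ (-2 + x) * (1 / 2))
      (β i * γ i / 2) (i ≡ k [ZMOD (N:ℤ)])
      (fun x => by beta_reduce
                   rw [deltaSeq_eq_of N (show (-1 + x) - (1+k) = x - (k+2) by ring)]; ring)
      (by beta_reduce; ring_nf) (modeq_iff_modeq (by omega)),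
    sum_dd N hN0 (i+1) k (fun j => β j * γ (j-1) / 2)
      (by intro j; beta_reduce;
          rw [show j + (N:ℤ) - 1 = (j-1) + (N:ℤ) by ring, hβ, hγ])
      (fun x => β x * deltaSeq N (2 + i) (1 + x) * γ (-1 + x) * deltaSeq N (1 + k) (1 + x) * (1 / 2))
      (β (i+1) * γ i / 2) (i ≡ k - 1 [ZMOD (N:ℤ)])
      (fun x => by beta_reduce
                   rw [deltaSeq_eq_of N (show (1 + x) - (2+i) = x - (i+1) by ring),
                       deltaSeq_eq_of N (show (1 + x) - (1+k) = x - k by ring)]; ring)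
      (by beta_reduce; ring_nf) (modeq_iff_modeq (by omega))]

lemma caseAA (i k : ℤ) : piD N (D2 α β γ) (dA N i) (dA N k) = 0 := by
  rw [dA_eq, dA_eq, piD_single]
  norm_num [Finset.sum_insert, Finset.mem_insert, Finset.mem_singleton, sgn, D2]

lemma caseCC (i k : ℤ) : piD N (D2 α β γ) (dC N i) (dC N k) = 0 := by
  rw [dC_eq, dC_eq, piD_single]
  norm_num [Finset.sum_insert, Finset.mem_insert, Finset.mem_singleton, sgn, D2]

end Cases
theorem stmt8 (N : ℕ) (hN : 2 < N) (α β γ : ℤ → ℝ)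
    (hα : ∀ j : ℤ, α (j + (N : ℤ)) = α j)
    (hβ : ∀ j : ℤ, β (j + (N : ℤ)) = β j)
    (hγ : ∀ j : ℤ, γ (j + (N : ℤ)) = γ j) :
    (∀ i : ℤ, piD N (D2 α β γ) (dA N i) (dB N (i - 1)) = -(α i * β (i - 1)) / 2) ∧
    (∀ i : ℤ, piD N (D2 α β γ) (dA N i) (dB N i) = α i * β i / 2) ∧
    (∀ i : ℤ, piD N (D2 α β γ) (dA N i) (dC N (i - 2)) = -(α i * γ (i - 2)) / 2) ∧
    (∀ i : ℤ, piD N (D2 α β γ) (dA N i) (dC N i) = α i * γ i / 2) ∧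
    (∀ i : ℤ, piD N (D2 α β γ) (dB N i) (dB N (i + 1)) = α (i + 1) * γ i) ∧
    (∀ i : ℤ, piD N (D2 α β γ) (dB N i) (dC N (i - 1)) = -(β i * γ (i - 1)) / 2) ∧
    (∀ i : ℤ, piD N (D2 α β γ) (dB N i) (dC N i) = β i * γ i / 2) ∧
    -- all other pairs of differentials have vanishing bracket:
    (∀ i j : ℤ, piD N (D2 α β γ) (dA N i) (dA N j) = 0) ∧
    (∀ i j : ℤ, piD N (D2 α β γ) (dC N i) (dC N j) = 0) ∧
    (∀ i j : ℤ, ¬ j ≡ i - 1 [ZMOD (N : ℤ)] → ¬ j ≡ i [ZMOD (N : ℤ)] →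
      piD N (D2 α β γ) (dA N i) (dB N j) = 0 ∧ piD N (D2 α β γ) (dB N j) (dA N i) = 0) ∧
    (∀ i j : ℤ, ¬ j ≡ i - 2 [ZMOD (N : ℤ)] → ¬ j ≡ i [ZMOD (N : ℤ)] →
      piD N (D2 α β γ) (dA N i) (dC N j) = 0 ∧ piD N (D2 α β γ) (dC N j) (dA N i) = 0) ∧
    (∀ i j : ℤ, ¬ j ≡ i + 1 [ZMOD (N : ℤ)] → ¬ i ≡ j + 1 [ZMOD (N : ℤ)] →
      piD N (D2 α β γ) (dB N i) (dB N j) = 0) ∧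
    (∀ i j : ℤ, ¬ j ≡ i - 1 [ZMOD (N : ℤ)] → ¬ j ≡ i [ZMOD (N : ℤ)] →
      piD N (D2 α β γ) (dB N i) (dC N j) = 0 ∧ piD N (D2 α β γ) (dC N j) (dB N i) = 0) := by
  refine ⟨?_, ?_, ?_, ?_, ?_, ?_, ?_, ?_, ?_, ?_, ?_, ?_, ?_⟩
  · intro i
    rw [caseAB hN α β γ hα hβ i (i-1), if_neg (nmod hN (by omega)),
        if_pos (Int.ModEq.refl _)]
    ring
  · intro i
    rw [caseAB hN α β γ hα hβ i i, if_pos (Int.ModEq.refl _),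
        if_neg (nmod hN (by omega))]
    ring
  · intro i
    rw [caseAC hN α β γ hα hβ hγ i (i-2), if_neg (nmod hN (by omega)),
        if_neg (nmod hN (by omega)), if_pos (Int.ModEq.refl _)]
    ring
  · intro i
    rw [caseAC hN α β γ hα hβ hγ i i, if_neg (nmod hN (by omega)),
        if_pos (Int.ModEq.refl _), if_neg (nmod hN (by omega))]
    ring
  · intro i
    have h1 : ¬ (i ≡ i+1+1 [ZMOD (N:ℤ)]) := nmod hN (by omega)
    have h2 : (i+1 : ℤ) ≡ i+1 [ZMOD (N:ℤ)] := Int.ModEq.refl _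
    rw [caseBB hN α β γ hα hγ i (i+1)]
    simp only [if_pos h2, if_neg h1]
    ring
  · intro i
    rw [caseBC hN α β γ hβ hγ i (i-1), if_neg (nmod hN (by omega)),
        if_pos (Int.ModEq.refl _)]
    ring
  · intro i
    rw [caseBC hN α β γ hβ hγ i i, if_pos (Int.ModEq.refl _),
        if_neg (nmod hN (by omega))]
    ring
  · exact fun i j => caseAA α β γ i j
  · exact fun i j => caseCC α β γ i j
  · intro i j hj1 hj2
    constructor
    · rw [caseAB hN α β γ hα hβ i j, if_neg hj2, if_neg hj1]; ring
    · rw [caseBA hN α β γ hα hβ j i, if_neg hj2, if_neg hj1]; ring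
  · intro i j hj1 hj2
    constructor
    · rw [caseAC hN α β γ hα hβ hγ i j, if_neg hj2, if_neg hj1]; ring
    · rw [caseCA hN α β γ hα hβ hγ j i, if_neg hj2, if_neg hj1]; ring
  · intro i j hj1 hj2
    rw [caseBB hN α β γ hα hγ i j]
    simp only [if_neg hj1, if_neg hj2]
    ring
  · intro i j hj1 hj2
    constructor
    · rw [caseBC hN α β γ hβ hγ i j, if_neg hj2, if_neg hj1]; ring
    · rw [caseCB hN α β γ hβ hγ j i, if_neg hj2, if_neg hj1]; ring
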